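/- The sum of all fractions at level n of the Calkin-Wilf tree equals 3·2^(n-2) − 1/2, for n ≥ 1. -/

import Mathlib

def cwLevel : ℕ → List (ℕ × ℕ)
  | 0 => [(1, 1)]
  | n + 1 => (cwLevel n).flatMap fun p => [(p.1, p.1 + p.2), (p.1 + p.2, p.2)]

lemma cw_pos : ∀ n, ∀ p ∈ cwLevel n, 0 < p.1 ∧ 0 < p.2 := by
  intro n
  induction n with
  | zero => simp [cwLevel]
  | succ m ih =>
    intro p hp
    simp only [cwLevel, List.mem_flatMap] at hp
    obtain ⟨q, hq, hpq⟩ := hp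
    obtain ⟨h1, h2⟩ := ih q hq
    simp only [List.mem_cons, List.mem_singleton] at hpq
    rcases hpq with rfl | rfl | h
    · exact ⟨h1, by omega⟩
    · exact ⟨by omega, h2⟩
    · simp at h

lemma cw_length (n : ℕ) : (cwLevel n).length = 2 ^ n := by
  induction n with
  | zero => simp [cwLevel]
  | succ m ih =>
    simp only [cwLevel, List.length_flatMap]
    rw [show (fun p : ℕ × ℕ => [(p.1, p.1 + p.2), (p.1 + p.2, p.2)].length)
        = fun _ => 2 from rfl]
    rw [List.map_const', List.sum_replicate, smul_eq_mul, ih]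
    ring

lemma cw_swap (n : ℕ) : (cwLevel n).map Prod.swap = (cwLevel n).reverse := by
  induction n with
  | zero => simp [cwLevel]
  | succ m ih =>
    show ((cwLevel m).flatMap _).map Prod.swap = ((cwLevel m).flatMap _).reverse
    rw [List.map_flatMap, List.reverse_flatMap, ← ih, List.flatMap_map]
    congr 1
    funext p
    simp [Prod.swap, Nat.add_comm]

lemma pair_sum : ∀ l : List (ℕ × ℕ), (∀ p ∈ l, 0 < p.1 ∧ 0 < p.2) →
    (l.map fun p => (p.1 : ℚ) / (p.1 + p.2)).sum
      + (l.map fun p => (p.2 : ℚ) / (p.1 + p.2)).sum = l.length := by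
  intro l
  induction l with
  | nil => simp
  | cons a t ih =>
    intro hpos
    have ha := hpos a List.mem_cons_self
    have ht := ih fun p hp => hpos p (List.mem_cons_of_mem a hp)
    have hs : (a.1 : ℚ) + a.2 ≠ 0 := by
      have : 0 < a.1 := ha.1
      positivity
    have key : (a.1 : ℚ) / (a.1 + a.2) + a.2 / (a.1 + a.2) = 1 := by
      field_simp
    simp only [List.map_cons, List.sum_cons, List.length_cons]
    push_cast
    linarith

lemma sum_half (l : List (ℕ × ℕ)) (hpos : ∀ p ∈ l, 0 < p.1 ∧ 0 < p.2)
    (hs : l.map Prod.swap = l.reverse) :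
    (l.map fun p => (p.1 : ℚ) / (p.1 + p.2)).sum = l.length / 2 := by
  have h1 : (l.map fun p => (p.1 : ℚ) / (p.1 + p.2)).sum
      = (l.map fun p => (p.2 : ℚ) / (p.1 + p.2)).sum := by
    conv_lhs => rw [← List.sum_reverse, ← List.map_reverse, ← hs, List.map_map]
    refine congrArg List.sum (List.map_congr_left fun p _ => ?_)
    simp [Function.comp, add_comm]
  have h2 := pair_sum l hpos
  rw [h1] at h2 ⊢
  linarith

lemma sum_step : ∀ l : List (ℕ × ℕ), (∀ p ∈ l, 0 < p.1 ∧ 0 < p.2) →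
    ((l.flatMap fun p => [(p.1, p.1 + p.2), (p.1 + p.2, p.2)]).map
        fun p => (p.1 : ℚ) / p.2).sum
      = (l.map fun p => (p.1 : ℚ) / (p.1 + p.2)).sum + l.length
        + (l.map fun p => (p.1 : ℚ) / p.2).sum := by
  intro l
  induction l with
  | nil => simp
  | cons a t ih =>
    intro hpos
    have ha := hpos a List.mem_cons_self
    have ht := ih fun p hp => hpos p (List.mem_cons_of_mem a hp)
    have hb : (a.2 : ℚ) ≠ 0 := by
      have : 0 < a.2 := ha.2; positivity
    have key : ((a.1 : ℚ) + a.2) / a.2 = a.1 / a.2 + 1 := by field_simp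
    simp only [List.flatMap_cons, List.map_append, List.sum_append, List.map_cons,
      List.sum_cons, List.map_nil, List.sum_nil, List.length_cons]
    push_cast
    rw [ht]
    push_cast
    linarith [key]

lemma cw_sum (m : ℕ) :
    ((cwLevel m).map fun p => (p.1 : ℚ) / p.2).sum = 3 * 2 ^ m / 2 - 1 / 2 := by
  induction m with
  | zero => simp [cwLevel]; norm_num
  | succ k ih =>
    show ((((cwLevel k).flatMap fun p => [(p.1, p.1 + p.2), (p.1 + p.2, p.2)])).map
        fun p => (p.1 : ℚ) / p.2).sum = _
    rw [sum_step _ (cw_pos k), sum_half _ (cw_pos k) (cw_swap k), ih, cw_length]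
    push_cast
    ring

/-- The sum of all fractions at level `n` (1-based) of the Calkin–Wilf tree
equals `3 * 2^(n-2) - 1/2` (with `2^(n-2)` interpreted in `ℚ`, so for `n = 1`
it is `3 * 2⁻¹ - 1/2 = 1`). -/
theorem cw_level_sum (n : ℕ) (hn : 1 ≤ n) :
    ((cwLevel (n - 1)).map fun p => (p.1 : ℚ) / p.2).sum
      = 3 * (2 : ℚ) ^ ((n : ℤ) - 2) - 1 / 2 := by
  obtain ⟨m, rfl⟩ := Nat.exists_eq_add_of_le hn
  have h1 : 1 + m - 1 = m := by omega
  have h2 : ((1 + m : ℕ) : ℤ) - 2 = (m : ℤ) - 1 := by push_cast; ring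
  rw [h1, h2, cw_sum m, zpow_sub₀ (by norm_num : (2:ℚ) ≠ 0), zpow_natCast, zpow_one]
  ring
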